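/- arXiv:2101.02251 — 14 statements merged into one kernel-verified Lean document; each statement's English description precedes it below -/
import Mathlib

section
/- Let P > 0 be historical prices with chosen product c, p ≥ 0 new prices, and j ≠ c another product. The set W^j = { v ∈ ℝ^n_+ : v_c ≥ P_c, v_c - P_c ≥ v_k - P_k for all k, v_j ≥ p_j, and v_j - p_j ≥ v_k - p_k for all k } is nonempty if and only if p_j - p_c ≤ P_j - P_c. -/
/-- For `j ≠ c`, the set W^j (valuations in the IC polyhedron of
`(P, c)` incentive-compatible with purchasing `j` under new prices `p ≥ 0`) is
nonempty if and only if `p j - p c ≤ P j - P c`. -/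
theorem stmt_2 (n : ℕ) (P p : Fin n → ℝ) (c j : Fin n) (hjc : j ≠ c)
    (hP : ∀ k, 0 < P k) (hp : ∀ k, 0 ≤ p k) :
    (∃ v : Fin n → ℝ, (∀ k, 0 ≤ v k) ∧ P c ≤ v c ∧
      (∀ k, v k - P k ≤ v c - P c) ∧ p j ≤ v j ∧
      (∀ k, v k - p k ≤ v j - p j)) ↔ p j - p c ≤ P j - P c := by
  constructor
  · rintro ⟨v, _, _, h1, _, h2⟩
    have a := h1 j
    have b := h2 c
    linarith
  · intro h
    set t := max (p c - P c) 0 with ht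
    set s := max (P c - p c) 0 with hs
    have hts : t - s = p c - P c := by
      rcases le_total (p c) (P c) with hle | hle
      · simp [ht, hs, max_eq_right, max_eq_left, sub_nonneg.mpr hle, sub_nonpos.mpr hle]
      · simp [ht, hs, max_eq_left, max_eq_right, sub_nonneg.mpr hle, sub_nonpos.mpr hle]
    have ht0 : 0 ≤ t := le_max_right _ _
    have hs0 : 0 ≤ s := le_max_right _ _
    refine ⟨fun k => if k = c then P c + t else if k = j then p j + s else 0, ?_, ?_, ?_, ?_, ?_⟩
    · intro k
      by_cases hkc : k = c
      · simp [hkc]; linarith [hP c]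
      · by_cases hkj : k = j
        · simp [hkc, hkj, hjc]; linarith [hp j]
        · simp [hkc, hkj]
    · simp; linarith
    · intro k
      by_cases hkc : k = c
      · simp [hkc]
      · by_cases hkj : k = j
        · simp [hkc, hkj, hjc]; linarith
        · simp [hkc, hkj]; linarith [hP k]
    · simp [hjc]; linarith
    · intro k
      by_cases hkc : k = c
      · simp [hkc, hjc, Ne.symm hjc]; linarith
      · by_cases hkj : k = j
        · simp [hkc, hkj]
        · simp [hkc, hkj, hjc]; linarith [hp k]
end

section
/- Suppose every customer i ∈ {1,...,m} observed the same historical price P_i for all products and prices are sorted so that P_1 ≤ P_2 ≤ ... ≤ P_m. Then setting all new product prices equal to P_{i*}, where i* maximizes (m - i + 1)·P_i over i ∈ {1,...,m}, maximizes the total worst-case revenue ∑_i f_i(p) over all price vectors p ≥ 0, and the optimal total revenue equals max_i (m - i + 1)·P_i. -/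
/-- The worst-case revenue in the attained-supremum (relaxed, `ε = 0`) sense:
the customer purchases iff `p c ≤ P c`, and in the worst case she picks the
cheapest product among her historical choice `c` and products that are strictly
incentive-compatible under the new prices (`p j - p c < P j - P c`). -/
noncomputable def grev {n : ℕ} (P p : Fin n → ℝ) (c : Fin n) : ℝ :=
  if p c ≤ P c then
    (Finset.univ.filter fun j => j = c ∨ p j - p c < P j - P c).inf' ⟨c, by simp⟩ p
  else 0

lemma grev_const {n : ℕ} (A : ℝ) (p : Fin n → ℝ) (c : Fin n) :
    grev (fun _ => A) p c =
      if p c ≤ A then Finset.univ.inf' ⟨c, Finset.mem_univ c⟩ p else 0 := by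
  unfold grev
  split_ifs with h
  · apply le_antisymm
    · obtain ⟨j0, _, hj0e⟩ := Finset.exists_mem_eq_inf' ⟨c, Finset.mem_univ c⟩ p
      rw [hj0e]
      rcases lt_or_ge (p j0) (p c) with hlt | hle
      · exact Finset.inf'_le _ (by simp [hlt])
      · have : p c ≤ p j0 := hle
        have h2 : p c = p j0 := le_antisymm this (hj0e ▸ Finset.inf'_le _ (Finset.mem_univ c))
        rw [← h2]
        exact Finset.inf'_le _ (by simp)
    · exact Finset.le_inf' _ _ fun j hj => Finset.inf'_le _ (Finset.mem_univ j)
  · rfl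

/-- If every customer `i` observed the same historical price `Pc i`
for all products, with prices sorted nondecreasingly, then setting all new
prices to `Pc istar`, where `istar` maximizes `(m - i + 1) * Pc i`, maximizes
the total worst-case revenue over nonnegative price vectors, and the optimum
equals `(m - istar + 1) * Pc istar` (written 0-based as `m - istar.1`). -/
theorem stmt_4 (m n : ℕ) (Pc : Fin m → ℝ) (c : Fin m → Fin n)
    (hpos : ∀ i, 0 < Pc i) (hmono : Monotone Pc)
    (istar : Fin m)
    (hstar : ∀ i : Fin m,
      ((m - i.1 : ℕ) : ℝ) * Pc i ≤ ((m - istar.1 : ℕ) : ℝ) * Pc istar) :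
    (∀ p : Fin n → ℝ, (∀ j, 0 ≤ p j) →
      ∑ i, grev (fun _ => Pc i) p (c i) ≤
        ∑ i, grev (fun _ => Pc i) (fun _ => Pc istar) (c i)) ∧
    ∑ i, grev (fun _ => Pc i) (fun _ => Pc istar) (c i)
      = ((m - istar.1 : ℕ) : ℝ) * Pc istar := by
  classical
  have hn : (Finset.univ : Finset (Fin n)).Nonempty := ⟨c istar, Finset.mem_univ _⟩
  -- cardinality of upper sets in Fin m
  have hcard : ∀ i0 : Fin m,
      (Finset.univ.filter fun i => i0 ≤ i).card = m - i0.1 := by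
    intro i0
    have : (Finset.univ.filter fun i => i0 ≤ i) = Finset.Ici i0 := by
      ext x; simp [Finset.mem_Ici]
    rw [this, Fin.card_Ici]
  have hiff : ∀ i, Pc istar ≤ Pc i ↔ istar ≤ i := by
    intro i
    constructor
    · intro h
      by_contra hlt
      push_neg at hlt
      have hle : Pc i ≤ Pc istar := hmono hlt.le
      have heq : Pc i = Pc istar := le_antisymm hle h
      have := hstar i
      rw [heq] at this
      have hc : ((m - i.1 : ℕ) : ℝ) ≤ ((m - istar.1 : ℕ) : ℝ) :=
        le_of_mul_le_mul_right this (hpos istar)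
      have : (m - i.1 : ℕ) ≤ (m - istar.1 : ℕ) := Nat.cast_le.mp hc
      have h1 : i.1 < istar.1 := hlt
      have h2 : istar.1 < m := istar.2
      omega
    · intro h; exact hmono h
  have hval : ∀ i, grev (fun _ => Pc i) (fun _ => Pc istar) (c i)
      = if istar ≤ i then Pc istar else 0 := by
    intro i
    rw [grev_const]
    simp [hiff i, Finset.inf'_const]
    split_ifs
    · exact le_antisymm (Finset.inf'_le _ (Finset.mem_univ (c i))) (Finset.le_inf' _ _ fun _ _ => le_rfl)
    · rfl
  have heq2 : ∑ i, grev (fun _ => Pc i) (fun _ => Pc istar) (c i)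
      = ((m - istar.1 : ℕ) : ℝ) * Pc istar := by
    simp only [hval]
    rw [Finset.sum_ite, Finset.sum_const, Finset.sum_const_zero, add_zero,
      hcard istar, nsmul_eq_mul]
  refine ⟨?_, heq2⟩
  intro p hp
  rw [heq2]
  set t := Finset.univ.inf' hn p with ht
  obtain ⟨j0, _, hj0⟩ := Finset.exists_mem_eq_inf' hn p
  have ht0 : 0 ≤ t := by rw [ht, hj0]; exact hp j0
  have hstep : ∑ i, grev (fun _ => Pc i) p (c i)
      ≤ ∑ i : Fin m, if t ≤ Pc i then t else 0 := by
    apply Finset.sum_le_sum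
    intro i _
    rw [grev_const]
    split_ifs with h1 h2
    · exact le_of_eq rfl
    · exact absurd (le_trans (Finset.inf'_le _ (Finset.mem_univ (c i))) h1) h2
    · exact ht0
    · exact le_refl 0
  refine hstep.trans ?_
  rw [Finset.sum_ite, Finset.sum_const, Finset.sum_const_zero, add_zero, nsmul_eq_mul]
  set S := Finset.univ.filter fun i : Fin m => t ≤ Pc i with hS
  rcases S.eq_empty_or_nonempty with hSe | hSne
  · rw [hSe]
    simp only [Finset.card_empty, Nat.cast_zero, zero_mul]
    have h2 : istar.1 < m := istar.2
    have : (0:ℝ) < ((m - istar.1 : ℕ) : ℝ) := by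
      have : 0 < m - istar.1 := by omega
      exact_mod_cast this
    exact le_of_lt (mul_pos this (hpos istar))
  · set i0 := S.min' hSne with hi0
    have hi0S : i0 ∈ S := S.min'_mem hSne
    have hti0 : t ≤ Pc i0 := (Finset.mem_filter.mp hi0S).2
    have hsub : S ⊆ Finset.univ.filter fun i => i0 ≤ i := by
      intro x hx
      exact Finset.mem_filter.mpr ⟨Finset.mem_univ x, S.min'_le x hx⟩
    have hcle : S.card ≤ m - i0.1 := (Finset.card_le_card hsub).trans (le_of_eq (hcard i0))
    calc (S.card : ℝ) * t ≤ ((m - i0.1 : ℕ) : ℝ) * Pc i0 := by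
          apply mul_le_mul (by exact_mod_cast hcle) hti0 ht0
          exact_mod_cast Nat.zero_le _
      _ ≤ ((m - istar.1 : ℕ) : ℝ) * Pc istar := hstar i0
end

section
/- Suppose every customer observed the same historical price vector, i.e., P_{ij} = P_j for all customers i and products j. Then setting new prices p_j = P_j - ε for any arbitrarily small ε > 0 (in the supremum formulation, p = P) attains the supremum of the total worst-case revenue, which equals ∑_{i=1}^m P_{c_i}, where c_i is customer i's historical choice. -/
lemma grev_self {n : ℕ} (Pv : Fin n → ℝ) (c : Fin n) : grev Pv Pv c = Pv c := by
  unfold grev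
  rw [if_pos le_rfl]
  have hset : (Finset.univ.filter fun j => j = c ∨ Pv j - Pv c < Pv j - Pv c) = {c} := by
    ext j
    simp
  refine (Finset.inf'_congr _ hset (fun _ _ => rfl)).trans ?_
  simp

lemma grev_le {n : ℕ} (Pv p : Fin n → ℝ) (c : Fin n) (hpos : 0 < Pv c) :
    grev Pv p c ≤ Pv c := by
  unfold grev
  split_ifs with h
  · refine le_trans (Finset.inf'_le _ ?_) h
    simp
  · exact hpos.le

/-- If every customer observed the same historical price vector
`Pv`, then setting the new prices equal to `Pv` attains the supremum of the
total worst-case revenue, which equals `∑ i, Pv (c i)`. -/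
theorem stmt_5 (m n : ℕ) (Pv : Fin n → ℝ) (c : Fin m → Fin n)
    (hpos : ∀ j, 0 < Pv j) :
    ∑ i, grev Pv Pv (c i) = ∑ i, Pv (c i) ∧
    ∀ p : Fin n → ℝ, (∀ j, 0 ≤ p j) →
      ∑ i, grev Pv p (c i) ≤ ∑ i, Pv (c i) := by
  constructor
  · exact Finset.sum_congr rfl fun i _ => grev_self Pv (c i)
  · intro p _
    exact Finset.sum_le_sum fun i _ => grev_le Pv p (c i) (hpos (c i))
end

section
/- Conservative pricing, which sets each product's price to the minimum historical price at which it was purchased, yields total worst-case revenue at least m·P̲, where P̲ = min_i P_{i c_i}. Consequently its revenue is at least the fraction P̲/P̄ of the optimal worst-case revenue, where P̄ = max_i P_{i c_i}. -/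
/-- Conservative pricing (each product priced at the minimum
historical price at which it was purchased) yields total worst-case revenue at
least `m * Pmin`, hence at least the fraction `Pmin / Pmax` of the optimal
worst-case revenue, where `Pmin` / `Pmax` are the minimum / maximum historical
purchase prices. -/
theorem stmt_6 (m n : ℕ) [NeZero m]
    (P : Fin m → Fin n → ℝ) (c : Fin m → Fin n)
    (hP : ∀ i j, 0 < P i j) :
    let Pmin := Finset.univ.inf' Finset.univ_nonempty fun i => P i (c i)
    let Pmax := Finset.univ.sup' Finset.univ_nonempty fun i => P i (c i)
    let pcons : Fin n → ℝ := fun j =>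
      if h : (Finset.univ.filter fun i => c i = j).Nonempty then
        (Finset.univ.filter fun i => c i = j).inf' h fun i => P i j
      else Pmax
    ((m : ℝ) * Pmin ≤ ∑ i, grev (P i) pcons (c i)) ∧
    ∀ p : Fin n → ℝ, (∀ j, 0 ≤ p j) →
      (Pmin / Pmax) * ∑ i, grev (P i) p (c i) ≤ ∑ i, grev (P i) pcons (c i) := by
  intro Pmin Pmax pcons
  have hPminle : ∀ i, Pmin ≤ P i (c i) := fun i =>
    Finset.inf'_le _ (Finset.mem_univ i)
  have hlemax : ∀ i, P i (c i) ≤ Pmax := fun i =>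
    Finset.le_sup' (f := fun k => P k (c k)) (Finset.mem_univ i)
  have hPmin_pos : 0 < Pmin := by
    rw [Finset.lt_inf'_iff]
    exact fun i _ => hP i (c i)
  have hPminmax : Pmin ≤ Pmax :=
    le_trans (hPminle (Classical.arbitrary _)) (hlemax (Classical.arbitrary _))
  have hPmax_pos : 0 < Pmax := lt_of_lt_of_le hPmin_pos hPminmax
  have h1 : ∀ j, Pmin ≤ pcons j := by
    intro j
    simp only [pcons]
    split
    · next h =>
      rw [Finset.le_inf'_iff]
      intro i hi
      have hci := (Finset.mem_filter.mp hi).2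
      have := hPminle i
      rwa [hci] at this
    · exact hPminmax
  have h2 : ∀ i, pcons (c i) ≤ P i (c i) := by
    intro i
    have hne : (Finset.univ.filter fun k => c k = c i).Nonempty :=
      ⟨i, by simp⟩
    simp only [pcons]
    rw [dif_pos hne]
    exact Finset.inf'_le _ (by simp)
  have key : ∀ i, Pmin ≤ grev (P i) pcons (c i) := by
    intro i
    unfold grev
    rw [if_pos (h2 i)]
    apply Finset.le_inf'
    intro j _
    exact h1 j
  have first : (m : ℝ) * Pmin ≤ ∑ i, grev (P i) pcons (c i) := by
    calc (m : ℝ) * Pmin = ∑ _i : Fin m, Pmin := by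
          simp [Finset.sum_const, Finset.card_univ, mul_comm]
      _ ≤ _ := Finset.sum_le_sum fun i _ => key i
  refine ⟨first, ?_⟩
  intro p hp
  have hub : ∀ i, grev (P i) p (c i) ≤ Pmax := by
    intro i
    unfold grev
    split
    · next h =>
      calc (Finset.univ.filter fun j => j = c i ∨ p j - p (c i) < P i j - P i (c i)).inf'
            ⟨c i, by simp⟩ p ≤ p (c i) := Finset.inf'_le _ (by simp)
        _ ≤ P i (c i) := h
        _ ≤ Pmax := hlemax i
    · exact le_of_lt hPmax_pos
  have hS : ∑ i, grev (P i) p (c i) ≤ (m : ℝ) * Pmax := by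
    calc ∑ i, grev (P i) p (c i) ≤ ∑ _i : Fin m, Pmax :=
          Finset.sum_le_sum fun i _ => hub i
      _ = (m : ℝ) * Pmax := by
          simp [Finset.sum_const, Finset.card_univ, mul_comm]
  have hdiv : 0 ≤ Pmin / Pmax := le_of_lt (div_pos hPmin_pos hPmax_pos)
  calc (Pmin / Pmax) * ∑ i, grev (P i) p (c i)
      ≤ (Pmin / Pmax) * ((m : ℝ) * Pmax) := mul_le_mul_of_nonneg_left hS hdiv
    _ = (m : ℝ) * Pmin := by
        field_simp
    _ ≤ _ := first
end

section
/- The ratio P̲/P̄ for conservative pricing is asymptotically tight: for one product and m customers where customer 1 purchased at price P_1 and customers 2,...,m purchased at price P_2 > P_1, conservative pricing yields revenue m·P_1 while the optimal price P_2 yields revenue (m-1)·P_2, so the ratio m·P_1/((m-1)·P_2) converges to P_1/P_2 as m → ∞. -/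
/-- Asymptotic tightness of the ratio `P1/P2` for conservative
pricing: one product, `m` customers, customer 1 purchased at price `P1`,
customers `2, …, m` at price `P2 > P1`. Conservative pricing (price `P1`)
yields revenue `m * P1`; the optimal price `P2` yields `(m - 1) * P2`; the
ratio `m * P1 / ((m - 1) * P2)` converges to `P1 / P2` as `m → ∞`. -/
theorem stmt_7 (P1 P2 : ℝ) (h1 : 0 < P1) (h12 : P1 < P2) :
    (∀ m : ℕ, 1 ≤ m →
      (∑ i : Fin m, if P1 ≤ (if i.1 = 0 then P1 else P2) then P1 else 0)
        = (m : ℝ) * P1 ∧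
      (∑ i : Fin m, if P2 ≤ (if i.1 = 0 then P1 else P2) then P2 else 0)
        = ((m : ℝ) - 1) * P2) ∧
    Filter.Tendsto (fun m : ℕ => ((m : ℝ) * P1) / (((m : ℝ) - 1) * P2))
      Filter.atTop (nhds (P1 / P2)) := by
  constructor
  · intro m hm
    obtain ⟨n, rfl⟩ := Nat.exists_eq_succ_of_ne_zero (by omega : m ≠ 0)
    constructor
    · simp [Fin.sum_univ_succ, h12.le, not_le.mpr h12]
      push_cast; ring
    · simp [Fin.sum_univ_succ, h12.le, not_le.mpr h12]
  · have key : Filter.Tendsto (fun m : ℕ => (m : ℝ) / ((m : ℝ) - 1))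
        Filter.atTop (nhds 1) := by
      have hA : Filter.Tendsto (fun m : ℕ => (m : ℝ) - 1) Filter.atTop
          Filter.atTop :=
        Filter.tendsto_atTop_add_const_right _ (-1) tendsto_natCast_atTop_atTop
      have hinv : Filter.Tendsto (fun m : ℕ => ((m : ℝ) - 1)⁻¹) Filter.atTop
          (nhds 0) := hA.inv_tendsto_atTop
      have h2 : Filter.Tendsto (fun m : ℕ => 1 + ((m : ℝ) - 1)⁻¹) Filter.atTop
          (nhds 1) := by
        simpa using (tendsto_const_nhds.add hinv)
      refine h2.congr' ?_
      filter_upwards [Filter.eventually_ge_atTop 2] with m hm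
      have : (m : ℝ) - 1 ≠ 0 := by
        have : (2 : ℝ) ≤ (m : ℝ) := by exact_mod_cast hm
        linarith
      field_simp
      ring
    have := key.mul (tendsto_const_nhds (x := P1 / P2))
    simp only [one_mul] at this
    refine this.congr (fun m => ?_)
    rw [div_mul_div_comm]
end

section
/- Let X be a random variable uniformly distributed on a finite multiset of positive values {q_1,...,q_m} with minimum P̲ and maximum P̄, and let R = max_i (1 - F(q_i))·q_i where F(x) = P(X < x). Then E[X] ≤ R·(1 + log(P̄/P̲)); equivalently R/E[X] ≥ 1/(1 + log(P̄/P̲)). -/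
open Finset

lemma auxA (d : ℕ → ℝ) : ∀ n, ∑ i ∈ Finset.range n, ∑ j ∈ Finset.range i, d j
    = ∑ j ∈ Finset.range n, ((n - 1 - j : ℕ) : ℝ) * d j := by
  intro n
  induction n with
  | zero => simp
  | succ n ih =>
    rw [Finset.sum_range_succ, ih, Finset.sum_range_succ, ← Finset.sum_add_distrib]
    have h0 : ((n + 1 - 1 - n : ℕ) : ℝ) * d n = 0 := by
      have : n + 1 - 1 - n = 0 := by omega
      rw [this]; simp
    rw [h0, add_zero]
    refine Finset.sum_congr rfl fun j hj => ?_
    have hj' := Finset.mem_range.mp hj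
    have e : (n + 1 - 1 - j : ℕ) = (n - 1 - j) + 1 := by omega
    rw [e]
    push_cast
    ring

/-- For `X` uniformly distributed on the positive values
`q 1, …, q m` with minimum `Pmin` and maximum `Pmax`, and
`R = max_i (1 - F(q i)) * q i` where `F(x) = P(X < x)` (so
`1 - F(q i) = #{{j : q j ≥ q i}} / m`), one has
`E[X] ≤ R * (1 + log (Pmax / Pmin))`. -/
theorem stmt_8 (m : ℕ) [NeZero m] (q : Fin m → ℝ) (hq : ∀ i, 0 < q i) :
    let Pmin := Finset.univ.inf' Finset.univ_nonempty q
    let Pmax := Finset.univ.sup' Finset.univ_nonempty q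
    let R := Finset.univ.sup' Finset.univ_nonempty fun i =>
      ((Finset.univ.filter fun j => q i ≤ q j).card : ℝ) / m * q i
    (∑ i, q i) / m ≤ R * (1 + Real.log (Pmax / Pmin)) := by
  intro Pmin Pmax R
  have hm : 0 < m := Nat.pos_of_ne_zero (NeZero.ne m)
  have hmR : (0:ℝ) < m := by exact_mod_cast hm
  set M := m - 1 with hMdef
  have hM : M < m := by omega
  set σ := Tuple.sort q with hσ
  have hmin : ∀ n : ℕ, min n M < m := fun n => lt_of_le_of_lt (min_le_right _ _) hM
  set g : ℕ → ℝ := fun n => q (σ ⟨min n M, hmin n⟩) with hgdef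
  have hmono : Monotone g := by
    intro a b hab
    exact Tuple.monotone_sort q (show (⟨min a M, hmin a⟩ : Fin m) ≤ ⟨min b M, hmin b⟩ by
      simp only [Fin.mk_le_mk]; omega)
  have hgval : ∀ (n : ℕ) (h : n < m), g n = q (σ ⟨n, h⟩) := by
    intro n h
    have hmn : min n M = n := by omega
    simp only [hgdef]
    exact congrArg q (congrArg σ (Fin.ext hmn))
  have hgpos : ∀ n, 0 < g n := fun n => hq _
  have hg0le : ∀ l : Fin m, g 0 ≤ q l := by
    intro l
    have h1 : q l = (q ∘ σ) (σ.symm l) := by simp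
    rw [h1]
    exact Tuple.monotone_sort q (show (⟨min 0 M, hmin 0⟩ : Fin m) ≤ σ.symm l from by
      simp [Fin.le_def])
  have hcard0 : (Finset.univ.filter fun l => q (σ ⟨0, hm⟩) ≤ q l) = Finset.univ := by
    ext l
    simp only [Finset.mem_filter, Finset.mem_univ, true_and, iff_true]
    have h1 := hg0le l
    rwa [hgval 0 hm] at h1
  have hg0R : g 0 ≤ R := by
    have h := Finset.le_sup' (fun i : Fin m =>
        ((Finset.univ.filter fun j => q i ≤ q j).card : ℝ) / m * q i)
      (Finset.mem_univ (σ ⟨0, hm⟩))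
    rw [hcard0] at h
    simp only [Finset.card_univ, Fintype.card_fin] at h
    rw [hgval 0 hm]
    calc q (σ ⟨0, hm⟩) = (m:ℝ)/m * q (σ ⟨0, hm⟩) := by field_simp
    _ ≤ R := h
  have hRpos : 0 < R := lt_of_lt_of_le (hgpos 0) hg0R
  have key : ∀ j ∈ Finset.range m, ((m - 1 - j : ℕ) : ℝ) * (g (j+1) - g j)
      ≤ (m : ℝ) * R * (Real.log (g (j+1)) - Real.log (g j)) := by
    intro j hj
    have hba : g j ≤ g (j+1) := hmono (by omega)
    have hlogba : Real.log (g j) ≤ Real.log (g (j+1)) := Real.log_le_log (hgpos j) hba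
    by_cases hjm : j + 1 < m
    · set i₁ : Fin m := ⟨j+1, hjm⟩ with hi₁
      set i₀ := σ i₁ with hi₀
      set c := (Finset.univ.filter fun l => q i₀ ≤ q l).card with hc
      have hb : g (j+1) = q i₀ := hgval (j+1) hjm
      have hIco : (Finset.Ico (j+1) m).card ≤ c := by
        apply Finset.card_le_card_of_injOn (fun k => σ ⟨min k M, hmin k⟩)
        · intro k hk
          simp only [Finset.mem_coe, Finset.mem_Ico] at hk
          simp only [Finset.mem_coe, Finset.mem_filter, Finset.mem_univ, true_and]
          exact Tuple.monotone_sort q (show i₁ ≤ ⟨min k M, hmin k⟩ from by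
            simp only [hi₁, Fin.mk_le_mk]; omega)
        · intro k hk k' hk' he
          simp only [Finset.coe_Ico, Set.mem_Ico] at hk hk'
          have h2 : min k M = min k' M := congrArg Fin.val (σ.injective he)
          omega
      have hcge : (m - 1 - j : ℕ) ≤ c := by
        rw [Nat.card_Ico] at hIco
        omega
      have hcR : (c:ℝ)/m * q i₀ ≤ R :=
        Finset.le_sup' (fun i : Fin m =>
          ((Finset.univ.filter fun j => q i ≤ q j).card : ℝ) / m * q i)
          (Finset.mem_univ i₀)
      set a := g j with ha
      set b := g (j+1) with hbd
      have hbpos : 0 < b := hgpos _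
      have hapos : 0 < a := hgpos _
      have hcb : (c:ℝ) * b ≤ m * R := by
        rw [← hb] at hcR
        rw [div_mul_eq_mul_div, div_le_iff₀ hmR] at hcR
        linarith
      have hlog : (b - a)/b ≤ Real.log b - Real.log a := by
        have h1 := Real.log_le_sub_one_of_pos (div_pos hapos hbpos)
        rw [Real.log_div hapos.ne' hbpos.ne'] at h1
        have h2 : (b - a)/b = 1 - a/b := by field_simp
        linarith
      have hfrac : (0:ℝ) ≤ (b - a)/b := div_nonneg (by linarith) hbpos.le
      calc ((m - 1 - j : ℕ):ℝ) * (b - a) ≤ (c:ℝ) * (b - a) := by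
            apply mul_le_mul_of_nonneg_right _ (by linarith)
            exact_mod_cast hcge
      _ = ((c:ℝ) * b) * ((b - a)/b) := by field_simp
      _ ≤ ((m:ℝ) * R) * ((b - a)/b) := mul_le_mul_of_nonneg_right hcb hfrac
      _ ≤ ((m:ℝ) * R) * (Real.log b - Real.log a) :=
            mul_le_mul_of_nonneg_left hlog (mul_nonneg hmR.le hRpos.le)
    · have h0 : (m - 1 - j : ℕ) = 0 := by
        simp only [Finset.mem_range] at hj; omega
      rw [h0]
      simp only [Nat.cast_zero, zero_mul]
      exact mul_nonneg (mul_nonneg hmR.le hRpos.le) (by linarith)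
  have hsum : ∑ i, q i = ∑ i ∈ Finset.range m, g i := by
    rw [← Fin.sum_univ_eq_sum_range, ← Equiv.sum_comp σ q]
    apply Finset.sum_congr rfl
    intro i _
    rw [hgval i i.isLt]
  have hdecomp : ∑ i ∈ Finset.range m, g i
      = (m:ℝ) * g 0 + ∑ j ∈ Finset.range m, ((m - 1 - j : ℕ):ℝ) * (g (j+1) - g j) := by
    rw [← auxA]
    have h1 : ∀ i ∈ Finset.range m, g i = g 0 + ∑ j ∈ Finset.range i, (g (j+1) - g j) := by
      intro i _
      rw [Finset.sum_range_sub]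
      ring
    rw [Finset.sum_congr rfl h1, Finset.sum_add_distrib, Finset.sum_const, Finset.card_range]
    simp [nsmul_eq_mul]
  have hbound : ∑ i ∈ Finset.range m, g i
      ≤ (m:ℝ) * g 0 + (m:ℝ) * R * (Real.log (g m) - Real.log (g 0)) := by
    rw [hdecomp]
    have h1 : ∑ j ∈ Finset.range m, ((m - 1 - j : ℕ):ℝ) * (g (j+1) - g j)
        ≤ ∑ j ∈ Finset.range m, (m:ℝ) * R * (Real.log (g (j+1)) - Real.log (g j)) :=
      Finset.sum_le_sum key
    have h2 : ∑ j ∈ Finset.range m, (m:ℝ) * R * (Real.log (g (j+1)) - Real.log (g j))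
        = (m:ℝ) * R * (Real.log (g m) - Real.log (g 0)) := by
      rw [← Finset.mul_sum, Finset.sum_range_sub (fun n => Real.log (g n))]
    linarith
  have hPminpos : 0 < Pmin := by
    apply (Finset.lt_inf'_iff _).mpr
    intro i _
    exact hq i
  have hPmaxpos : 0 < Pmax :=
    lt_of_lt_of_le (hq ⟨0, hm⟩) (Finset.le_sup' q (Finset.mem_univ _))
  have hgm : g m ≤ Pmax := Finset.le_sup' q (Finset.mem_univ _)
  have hg0' : Pmin ≤ g 0 := Finset.inf'_le q (Finset.mem_univ _)
  have hlog1 : Real.log (g m) ≤ Real.log Pmax := Real.log_le_log (hgpos m) hgm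
  have hlog2 : Real.log Pmin ≤ Real.log (g 0) := Real.log_le_log hPminpos hg0'
  rw [hsum, Real.log_div hPmaxpos.ne' hPminpos.ne']
  have hA : (m:ℝ) * g 0 ≤ m * R := mul_le_mul_of_nonneg_left hg0R hmR.le
  have hB : (m:ℝ) * R * (Real.log (g m) - Real.log (g 0))
      ≤ (m:ℝ) * R * (Real.log Pmax - Real.log Pmin) :=
    mul_le_mul_of_nonneg_left (by linarith) (mul_nonneg hmR.le hRpos.le)
  have hfin : ∑ i ∈ Finset.range m, g i
      ≤ (m:ℝ) * (R * (1 + (Real.log Pmax - Real.log Pmin))) := by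
    have he : (m:ℝ) * (R * (1 + (Real.log Pmax - Real.log Pmin)))
        = m * R + m * R * (Real.log Pmax - Real.log Pmin) := by ring
    linarith
  rw [div_le_iff₀ hmR]
  linarith [mul_comm (m:ℝ) (R * (1 + (Real.log Pmax - Real.log Pmin)))]
end

section
/- Cut-off pricing generates total worst-case revenue at least the fraction 1/(1 + log(P̄/P̲)) of the optimal value, where P̲ and P̄ are the minimum and maximum historical purchase prices over customers. -/
lemma sorted_sum_aux (m : ℕ) (w : ℕ → ℝ) (M : ℝ)
    (hpos : ∀ k, k < m → 0 < w k)
    (hmono : ∀ k, k + 1 < m → w k ≤ w (k + 1))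
    (hM : ∀ k, k < m → ((m - k : ℕ) : ℝ) * w k ≤ M) :
    ∀ d k, k + (d + 1) = m →
      ∑ j ∈ Finset.Ico k m, w j ≤
        (d + 1 : ℝ) * w k + M * (Real.log (w (m - 1)) - Real.log (w k)) := by
  intro d
  induction d with
  | zero =>
    intro k hk
    have h1 : m - 1 = k := by omega
    have h2 : m = k + 1 := by omega
    subst h2
    rw [h1, Nat.Ico_succ_singleton, Finset.sum_singleton]
    ring_nf
    linarith
  | succ d ih =>
    intro k hk
    have hk1 : k + 1 + (d + 1) = m := by omega
    have hlt : k < m := by omega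
    have hlt1 : k + 1 < m := by omega
    have hrec := ih (k + 1) hk1
    rw [Finset.sum_eq_sum_Ico_succ_bot hlt]
    have h1 : 0 < w k := hpos k hlt
    have h2 : 0 < w (k + 1) := hpos (k + 1) hlt1
    have hle : w k ≤ w (k + 1) := hmono k hlt1
    have hA : ((d : ℝ) + 1) * w (k + 1) ≤ M := by
      have := hM (k + 1) hlt1
      have hc : (m - (k + 1) : ℕ) = d + 1 := by omega
      rw [hc] at this
      push_cast at this
      linarith
    have hMpos : (0 : ℝ) ≤ M := le_trans (by positivity) hA
    have key : (w (k + 1) - w k) / w (k + 1) ≤ Real.log (w (k + 1)) - Real.log (w k) := by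
      have hlog := Real.log_le_sub_one_of_pos (show (0:ℝ) < w k / w (k + 1) by positivity)
      rw [Real.log_div h1.ne' h2.ne'] at hlog
      have : w k / w (k + 1) - 1 = -((w (k + 1) - w k) / w (k + 1)) := by
        field_simp
        ring
      linarith [this ▸ hlog]
    have h3 : ((d : ℝ) + 1) * (w (k + 1) - w k) ≤ M * (Real.log (w (k + 1)) - Real.log (w k)) := by
      have e1 : ((d : ℝ) + 1) * (w (k + 1) - w k)
          = (((d : ℝ) + 1) * w (k + 1)) * ((w (k + 1) - w k) / w (k + 1)) := by
        field_simp
      rw [e1]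
      exact mul_le_mul hA key (div_nonneg (by linarith) h2.le) hMpos
    push_cast
    push_cast at hrec
    linarith

/-- Cut-off pricing generates total worst-case revenue at least the
fraction `1 / (1 + log (Pmax / Pmin))` of the optimal value, where `Pmin` and
`Pmax` are the minimum and maximum historical purchase prices. The cut-off
price `pstar = P istar (c istar)` maximizes `#{i' : P_(i' c_i') ≥ P_(i c_i)} *
P_(i c_i)`, and each product is priced at its lowest historical purchase price
at least `pstar` (or `Pmax` if there is none). -/
theorem stmt_9 (m n : ℕ) [NeZero m]
    (P : Fin m → Fin n → ℝ) (c : Fin m → Fin n)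
    (hP : ∀ i j, 0 < P i j)
    (istar : Fin m)
    (hstar : ∀ i : Fin m,
      ((Finset.univ.filter fun i' => P i (c i) ≤ P i' (c i')).card : ℝ)
          * P i (c i) ≤
        ((Finset.univ.filter fun i' => P istar (c istar) ≤ P i' (c i')).card : ℝ)
          * P istar (c istar)) :
    let Pmin := Finset.univ.inf' Finset.univ_nonempty fun i => P i (c i)
    let Pmax := Finset.univ.sup' Finset.univ_nonempty fun i => P i (c i)
    let pstar := P istar (c istar)
    let pCP : Fin n → ℝ := fun j =>
      if h : (Finset.univ.filter fun i => c i = j ∧ pstar ≤ P i (c i)).Nonempty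
      then (Finset.univ.filter fun i => c i = j ∧ pstar ≤ P i (c i)).inf' h
        fun i => P i j
      else Pmax
    ∀ p : Fin n → ℝ, (∀ j, 0 ≤ p j) →
      (1 / (1 + Real.log (Pmax / Pmin))) * ∑ i, grev (P i) p (c i) ≤
        ∑ i, grev (P i) pCP (c i) := by
  intro Pmin Pmax pstar pCP p hp
  have hm : 0 < m := Nat.pos_of_ne_zero (NeZero.ne m)
  set v : Fin m → ℝ := fun i => P i (c i) with hv
  have hvpos : ∀ i, 0 < v i := fun i => hP i (c i)
  have hPminpos : 0 < Pmin := (Finset.lt_inf'_iff _).mpr fun i _ => hvpos i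
  have hPmin_le : ∀ i, Pmin ≤ v i := fun i => Finset.inf'_le _ (Finset.mem_univ i)
  have hle_Pmax : ∀ i, v i ≤ Pmax := fun i => Finset.le_sup' _ (Finset.mem_univ i)
  have hPminmax : Pmin ≤ Pmax := le_trans (hPmin_le istar) (hle_Pmax istar)
  have hlog0 : 0 ≤ Real.log (Pmax / Pmin) :=
    Real.log_nonneg ((one_le_div hPminpos).mpr hPminmax)
  have hL : 0 < 1 + Real.log (Pmax / Pmin) := by linarith
  have hpstar : pstar = v istar := rfl
  have hpstarpos : 0 < pstar := hvpos istar
  have hpstar_le_Pmax : pstar ≤ Pmax := hle_Pmax istar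
  set M : ℝ := ((Finset.univ.filter fun i' => pstar ≤ v i').card : ℝ) * pstar with hM
  have hMnonneg : 0 ≤ M := by positivity
  have hstar' : ∀ i : Fin m,
      ((Finset.univ.filter fun i' => v i ≤ v i').card : ℝ) * v i ≤ M := fun i => hstar i
  -- pCP is everywhere at least pstar
  have hpCP_ge : ∀ j, pstar ≤ pCP j := by
    intro j
    show pstar ≤ dite _ _ _
    split
    · next h =>
      apply Finset.le_inf'
      intro i hi
      rw [Finset.mem_filter] at hi
      rw [← hi.2.1]
      exact hi.2.2
    · exact hpstar_le_Pmax
  have hgrevCP_ge0 : ∀ i, 0 ≤ grev (P i) pCP (c i) := by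
    intro i
    unfold grev
    split
    · exact Finset.le_inf' _ _ fun b _ => le_trans hpstarpos.le (hpCP_ge b)
    · exact le_refl 0
  have hgrevCP_ge : ∀ i, pstar ≤ v i → pstar ≤ grev (P i) pCP (c i) := by
    intro i hi
    have hne : (Finset.univ.filter fun i' => c i' = c i ∧ pstar ≤ P i' (c i')).Nonempty :=
      ⟨i, Finset.mem_filter.mpr ⟨Finset.mem_univ i, rfl, hi⟩⟩
    have hcle : pCP (c i) ≤ P i (c i) := by
      show dite _ _ _ ≤ _
      rw [dif_pos hne]
      exact Finset.inf'_le _ (Finset.mem_filter.mpr ⟨Finset.mem_univ i, rfl, hi⟩)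
    unfold grev
    rw [if_pos hcle]
    exact Finset.le_inf' _ _ fun b _ => hpCP_ge b
  -- cut-off revenue at least M
  have hM_le : M ≤ ∑ i, grev (P i) pCP (c i) := by
    have h1 : M = ∑ i ∈ Finset.univ.filter fun i' => pstar ≤ v i', pstar := by
      rw [Finset.sum_const, nsmul_eq_mul, hM]
    rw [h1]
    calc ∑ i ∈ Finset.univ.filter fun i' => pstar ≤ v i', pstar
        ≤ ∑ i ∈ Finset.univ.filter fun i' => pstar ≤ v i', grev (P i) pCP (c i) :=
          Finset.sum_le_sum fun i hi => hgrevCP_ge i (Finset.mem_filter.mp hi).2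
      _ ≤ ∑ i, grev (P i) pCP (c i) :=
          Finset.sum_le_sum_of_subset_of_nonneg (Finset.subset_univ _)
            fun i _ _ => hgrevCP_ge0 i
  -- arbitrary revenue at most OPT
  have hgrevp_le : ∀ i, grev (P i) p (c i) ≤ v i := by
    intro i
    unfold grev
    split
    · next h =>
      refine le_trans (Finset.inf'_le _ ?_) h
      exact Finset.mem_filter.mpr ⟨Finset.mem_univ _, Or.inl rfl⟩
    · exact (hvpos i).le
  -- sorting
  set σ : Equiv.Perm (Fin m) := Tuple.sort v with hσ
  set w : ℕ → ℝ := fun k => if h : k < m then v (σ ⟨k, h⟩) else 1 with hw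
  have hwval : ∀ (k : ℕ) (h : k < m), w k = v (σ ⟨k, h⟩) := fun k h => dif_pos h
  have hwpos : ∀ k, k < m → 0 < w k := by
    intro k h; rw [hwval k h]; exact hvpos _
  have hwmono : ∀ k, k + 1 < m → w k ≤ w (k + 1) := by
    intro k h
    rw [hwval k (by omega), hwval (k + 1) h]
    exact Tuple.monotone_sort v (by simp [Fin.le_def])
  have hwM : ∀ k, k < m → ((m - k : ℕ) : ℝ) * w k ≤ M := by
    intro k h
    rw [hwval k h]
    set i0 : Fin m := σ ⟨k, h⟩ with hi0
    have hcard : (m - k : ℕ) ≤ (Finset.univ.filter fun i' => v i0 ≤ v i').card := by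
      have hsub : (Finset.Ici (⟨k, h⟩ : Fin m)).image σ ⊆
          Finset.univ.filter fun i' => v i0 ≤ v i' := by
        intro x hx
        rw [Finset.mem_image] at hx
        obtain ⟨j, hj, rfl⟩ := hx
        rw [Finset.mem_filter]
        refine ⟨Finset.mem_univ _, ?_⟩
        exact Tuple.monotone_sort v (Finset.mem_Ici.mp hj)
      calc (m - k : ℕ) = (Finset.Ici (⟨k, h⟩ : Fin m)).card := (by rw [Fin.card_Ici])
        _ = ((Finset.Ici (⟨k, h⟩ : Fin m)).image σ).card :=
            (Finset.card_image_of_injective _ σ.injective).symm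
        _ ≤ _ := Finset.card_le_card hsub
    calc ((m - k : ℕ) : ℝ) * v i0
        ≤ ((Finset.univ.filter fun i' => v i0 ≤ v i').card : ℝ) * v i0 :=
          mul_le_mul_of_nonneg_right (Nat.cast_le.mpr hcard) (hvpos i0).le
      _ ≤ M := hstar' i0
  -- sum identity
  have hsum : ∑ j ∈ Finset.Ico 0 m, w j = ∑ i, v i := by
    rw [(Finset.range_eq_Ico m).symm, ← Fin.sum_univ_eq_sum_range w m]
    rw [show ∑ i : Fin m, w ↑i = ∑ i : Fin m, v (σ i) from
      Finset.sum_congr rfl fun i _ => by rw [hwval i.1 i.2, Fin.eta]]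
    exact Equiv.sum_comp σ v
  have haux := sorted_sum_aux m w M hwpos hwmono hwM (m - 1) 0 (by omega)
  have hlogw : Real.log (w (m - 1)) - Real.log (w 0) ≤ Real.log (Pmax / Pmin) := by
    rw [Real.log_div (lt_of_lt_of_le hPminpos hPminmax).ne' hPminpos.ne']
    have h1 : w (m - 1) ≤ Pmax := by
      rw [hwval (m - 1) (by omega)]; exact hle_Pmax _
    have h2 : Pmin ≤ w 0 := by
      rw [hwval 0 hm]; exact hPmin_le _
    have := Real.log_le_log (hwpos (m - 1) (by omega)) h1
    have := Real.log_le_log hPminpos h2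
    linarith
  have hmw0 : ((m : ℕ) : ℝ) * w 0 ≤ M := by
    have := hwM 0 hm
    simpa using this
  have hOPT : ∑ i, v i ≤ M * (1 + Real.log (Pmax / Pmin)) := by
    rw [← hsum]
    have : ((m - 1 : ℕ) : ℝ) + 1 = (m : ℝ) := by
      have : (1 : ℕ) ≤ m := hm
      push_cast [Nat.cast_sub this]
      ring
    rw [this] at haux
    nlinarith [haux, hlogw, hmw0, hMnonneg]
  -- conclusion
  rw [one_div, inv_mul_le_iff₀ hL]
  calc ∑ i, grev (P i) p (c i) ≤ ∑ i, v i := Finset.sum_le_sum fun i _ => hgrevp_le i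
    _ ≤ M * (1 + Real.log (Pmax / Pmin)) := hOPT
    _ ≤ (1 + Real.log (Pmax / Pmin)) * ∑ i, grev (P i) pCP (c i) := by
        rw [mul_comm]
        exact mul_le_mul_of_nonneg_left hM_le hL.le
end

section
/- For any nondecreasing sequence of positive reals 0 < q_1 ≤ q_2 ≤ ... ≤ q_m, it holds that max_{1 ≤ i ≤ m} (m - i + 1)·q_i ≥ (∑_{i=1}^m q_i) / (1 + log(q_m/q_1)). -/
lemma sub_log_helper {a b R : ℝ} (m : ℕ) (ha : 0 < a) (hab : a ≤ b)
    (hR : (m : ℝ) * b ≤ R) (hR0 : 0 ≤ R) :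
    (m : ℝ) * (b - a) ≤ R * Real.log (b / a) := by
  have hb : 0 < b := lt_of_lt_of_le ha hab
  have h1 : Real.log (a / b) ≤ a / b - 1 := Real.log_le_sub_one_of_pos (by positivity)
  have h2 : 1 - a / b ≤ Real.log (b / a) := by
    rw [Real.log_div hb.ne' ha.ne']
    rw [Real.log_div ha.ne' hb.ne'] at h1
    linarith
  have h3 : (0:ℝ) ≤ 1 - a / b := by
    rw [sub_nonneg]
    exact div_le_one_of_le₀ hab hb.le
  calc (m : ℝ) * (b - a) = (m : ℝ) * b * (1 - a / b) := by
        field_simp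
    _ ≤ R * (1 - a / b) := mul_le_mul_of_nonneg_right hR h3
    _ ≤ R * Real.log (b / a) := mul_le_mul_of_nonneg_left h2 hR0

lemma key_lemma : ∀ (m : ℕ), 0 < m → ∀ (f : ℕ → ℝ) (R : ℝ),
    (∀ j, j < m → 0 < f j) → (∀ j, j + 1 < m → f j ≤ f (j + 1)) →
    (∀ j, j < m → ((m - j : ℕ) : ℝ) * f j ≤ R) →
    ∑ j ∈ Finset.range m, f j ≤ (m : ℝ) * f 0 + R * Real.log (f (m - 1) / f 0) := by
  intro m
  induction m with
  | zero => intro h; omega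
  | succ n ih =>
    intro _ f R hpos hmono hR
    rcases Nat.eq_zero_or_pos n with hn | hn
    · subst hn
      rw [Finset.sum_range_one]
      have : f (0 + 1 - 1) / f 0 = 1 := div_self (hpos 0 (by omega)).ne'
      rw [this, Real.log_one, mul_zero, add_zero]
      norm_num
    · -- n ≥ 1, so m = n+1 ≥ 2
      have hR0 : 0 ≤ R := by
        have := hR 0 (by omega)
        have := hpos 0 (by omega)
        nlinarith
      have hsum := Finset.sum_range_succ' f n
      have ihg := ih hn (fun j => f (j + 1)) R
        (fun j hj => hpos (j + 1) (by omega))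
        (fun j hj => hmono (j + 1) (by omega))
        (fun j hj => by
          have := hR (j + 1) (by omega)
          have e : n - j = n + 1 - (j + 1) := by omega
          rw [e]; exact this)
      have hf01 : f 0 ≤ f 1 := hmono 0 (by omega)
      have hf0 : 0 < f 0 := hpos 0 (by omega)
      have hf1 : 0 < f 1 := hpos 1 (by omega)
      have hfn : 0 < f n := hpos n (by omega)
      have hstep : (n : ℝ) * (f 1 - f 0) ≤ R * Real.log (f 1 / f 0) := by
        apply sub_log_helper n hf0 hf01 _ hR0
        have := hR 1 (by omega)
        have e : ((n + 1 - 1 : ℕ) : ℝ) = (n : ℝ) := by norm_num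
        rw [e] at this; exact this
      have hfn1 : ∀ k, k ≤ n → f 0 ≤ f k := by
        intro k
        induction k with
        | zero => intro _; exact le_refl _
        | succ l ihl => intro h; exact le_trans (ihl (by omega)) (hmono l (by omega))
      have hlogsplit : Real.log (f n / f 0) = Real.log (f n / f 1) + Real.log (f 1 / f 0) := by
        rw [← Real.log_mul (by positivity) (by positivity)]
        congr 1
        field_simp
      have hn1 : (n + 1 : ℕ) - 1 = n := by omega
      rw [hn1]
      rw [hsum]
      have e1 : (fun j => f (j + 1)) (n - 1) = f n := by
        show f (n - 1 + 1) = f n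
        congr 1
        omega
      rw [show f (n - 1 + 1) = f n from e1] at ihg
      have : ∑ i ∈ Finset.range n, f (i + 1) ≤ (n : ℝ) * f 1 + R * Real.log (f n / f 1) := ihg
      push_cast
      rw [hlogsplit]
      nlinarith [this, hstep]

/-- For any nondecreasing sequence of positive reals
`0 < q 1 ≤ … ≤ q m`, `max_i (m - i + 1) * q i ≥ (∑ i, q i) / (1 + log (q m / q 1))`. -/
theorem stmt_10 (m : ℕ) [NeZero m] (q : Fin m → ℝ)
    (hq : ∀ i, 0 < q i) (hmono : Monotone q) :
    (∑ i, q i) /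
        (1 + Real.log
          (q ⟨m - 1, Nat.sub_lt (Nat.pos_of_ne_zero (NeZero.ne m)) Nat.one_pos⟩
            / q 0)) ≤
      Finset.univ.sup' Finset.univ_nonempty
        fun i => ((m - i.1 : ℕ) : ℝ) * q i := by
  have hm : 0 < m := Nat.pos_of_ne_zero (NeZero.ne m)
  set R := Finset.univ.sup' Finset.univ_nonempty
      (fun i : Fin m => ((m - i.1 : ℕ) : ℝ) * q i) with hRdef
  have hRle : ∀ i : Fin m, ((m - i.1 : ℕ) : ℝ) * q i ≤ R :=
    fun i => Finset.le_sup' (fun i : Fin m => ((m - i.1 : ℕ) : ℝ) * q i) (Finset.mem_univ i)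
  set f : ℕ → ℝ := fun j => if h : j < m then q ⟨j, h⟩ else 1 with hfdef
  have hfe : ∀ j (h : j < m), f j = q ⟨j, h⟩ := fun j h => dif_pos h
  have hzero : (0 : Fin m) = ⟨0, hm⟩ := by
    apply Fin.ext; simp
  have hkey := key_lemma m hm f R
    (fun j hj => by rw [hfe j hj]; exact hq _)
    (fun j hj => by
      rw [hfe j (by omega), hfe (j + 1) hj]
      exact hmono (by simp [Fin.mk_le_mk]))
    (fun j hj => by rw [hfe j hj]; exact hRle ⟨j, hj⟩)
  have hsum : (∑ i, q i) = ∑ j ∈ Finset.range m, f j := by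
    rw [← Fin.sum_univ_eq_sum_range f m]
    exact Finset.sum_congr rfl fun i _ => by rw [hfe i.1 i.2]
  have hf0 : f 0 = q 0 := by rw [hfe 0 hm, hzero]
  have hfm : f (m - 1) = q ⟨m - 1, Nat.sub_lt hm Nat.one_pos⟩ :=
    hfe (m - 1) (Nat.sub_lt hm Nat.one_pos)
  have hmR : (m : ℝ) * q 0 ≤ R := by
    have := hRle 0
    simpa using this
  have hL : 0 ≤ Real.log
      (q ⟨m - 1, Nat.sub_lt (Nat.pos_of_ne_zero (NeZero.ne m)) Nat.one_pos⟩ / q 0) := by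
    apply Real.log_nonneg
    rw [le_div_iff₀ (hq 0), one_mul]
    exact hmono (by rw [hzero]; exact Fin.mk_le_mk.mpr (Nat.zero_le _))
  rw [div_le_iff₀ (by linarith : (0:ℝ) < 1 + Real.log _)]
  rw [hsum]
  calc ∑ j ∈ Finset.range m, f j
      ≤ (m : ℝ) * f 0 + R * Real.log (f (m - 1) / f 0) := hkey
    _ ≤ R * (1 + Real.log
        (q ⟨m - 1, Nat.sub_lt (Nat.pos_of_ne_zero (NeZero.ne m)) Nat.one_pos⟩ / q 0)) := by
        rw [hf0, hfm]
        ring_nf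
        nlinarith [hmR]
end

section
/- Pricing at the average historical price can be arbitrarily bad: with one product and m customers, where m-1 customers purchased at price 1 and one customer purchased at price 2, the average price (m+1)/m yields worst-case revenue (m+1)/m while pricing at 1 yields revenue m; hence the revenue ratio (m+1)/m² tends to 0 as m → ∞. -/
lemma aux_sum (m : ℕ) (hm : 1 ≤ m) (a b : ℝ) :
    ∑ i : Fin m, (if i.1 = m - 1 then a else b) = a + ((m : ℝ) - 1) * b := by
  have hc : m - 1 < m := by omega
  have h : ∀ i : Fin m, (if i.1 = m - 1 then a else b)
      = b + (if i = ⟨m - 1, hc⟩ then (a - b) else 0) := by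
    intro i
    by_cases h : i.1 = m - 1
    · rw [if_pos h, if_pos (Fin.ext h)]; ring
    · rw [if_neg h, if_neg (fun hh => h (by rw [hh]))]; ring
  simp_rw [h]
  rw [Finset.sum_add_distrib, Finset.sum_const, Finset.sum_ite_eq' Finset.univ]
  simp only [Finset.card_univ, Fintype.card_fin, Finset.mem_univ, if_true, nsmul_eq_mul]
  ring

/-- Average-price heuristic can be arbitrarily bad: one product,
`m` customers of which `m - 1` purchased at price `1` and one at price `2`.
The average price is `(m + 1)/m`; at that price only the price-2 customer
buys, for worst-case revenue `(m + 1)/m`, while price `1` earns `m`. The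
ratio `(m + 1)/m²` tends to `0`. -/
theorem stmt_12 :
    (∀ m : ℕ, 2 ≤ m →
      (∑ i : Fin m, (if i.1 = m - 1 then (2 : ℝ) else 1)) / m
        = ((m : ℝ) + 1) / m ∧
      (∑ i : Fin m, if ((m : ℝ) + 1) / m ≤ (if i.1 = m - 1 then (2 : ℝ) else 1)
          then ((m : ℝ) + 1) / m else 0) = ((m : ℝ) + 1) / m ∧
      (∑ i : Fin m, if (1 : ℝ) ≤ (if i.1 = m - 1 then (2 : ℝ) else 1)
          then (1 : ℝ) else 0) = (m : ℝ)) ∧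
    Filter.Tendsto (fun m : ℕ => ((m : ℝ) + 1) / (m : ℝ) ^ 2)
      Filter.atTop (nhds 0) := by
  constructor
  · intro m hm
    have hm1 : 1 ≤ m := by omega
    have hmR : (1 : ℝ) ≤ m := by exact_mod_cast hm1
    have hmpos : (0 : ℝ) < m := by linarith
    refine ⟨?_, ?_, ?_⟩
    · rw [aux_sum m hm1]; ring_nf
    · have hle : ((m : ℝ) + 1) / m ≤ 2 := by
        rw [div_le_iff₀ hmpos]; linarith
      have hnle : ¬ ((m : ℝ) + 1) / m ≤ 1 := by
        rw [div_le_iff₀ hmpos]; push_neg; linarith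
      have h : ∀ i : Fin m,
          (if ((m : ℝ) + 1) / m ≤ (if i.1 = m - 1 then (2 : ℝ) else 1)
            then ((m : ℝ) + 1) / m else 0)
          = (if i.1 = m - 1 then ((m : ℝ) + 1) / m else 0) := by
        intro i
        by_cases h : i.1 = m - 1 <;> simp [h, hle, hnle]
      simp_rw [h]
      rw [aux_sum m hm1]; ring
    · have h : ∀ i : Fin m,
          (if (1 : ℝ) ≤ (if i.1 = m - 1 then (2 : ℝ) else 1) then (1 : ℝ) else 0)
          = 1 := by
        intro i
        by_cases h : i.1 = m - 1 <;> simp [h]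
      simp_rw [h]
      simp
  · have h1 : Filter.Tendsto (fun m : ℕ => (1 : ℝ) / m) Filter.atTop (nhds 0) :=
      tendsto_one_div_atTop_nhds_zero_nat
    have h2 := h1.mul h1
    rw [mul_zero] at h2
    have h3 := h1.add h2
    rw [add_zero] at h3
    apply h3.congr'
    filter_upwards [Filter.eventually_ge_atTop 1] with m hm
    have : (m : ℝ) ≠ 0 := by positivity
    rw [pow_two]
    field_simp
end

section
/- Pricing according to a uniformly random historical customer's observed prices can be arbitrarily bad: in the instance with n products and n customers where customer i observed price 1 for product i and price 2 for all other products and purchased product i, each of the n candidate price vectors yields total worst-case revenue exactly 1, while the vector of all-ones prices yields revenue n; hence the expected-revenue ratio is at most 1/n → 0. -/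
/-- Random-historical-price heuristic can be arbitrarily bad: with
`n` products and `n` customers where customer `i` observed price `1` for
product `i` and `2` for the others and purchased product `i`, each candidate
price vector `P k` yields total worst-case revenue exactly `1`, while the
all-ones price vector yields `n`; the ratio `1/n` tends to `0`. -/
theorem stmt_13 (n : ℕ) [NeZero n] :
    (∀ k : Fin n, ∑ i,
        grev (fun j => if i = j then (1 : ℝ) else 2)
          (fun j => if k = j then (1 : ℝ) else 2) i = 1) ∧
    (∑ i : Fin n,
        grev (fun j => if i = j then (1 : ℝ) else 2) (fun _ => (1 : ℝ)) i
      = (n : ℝ)) ∧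
    Filter.Tendsto (fun n : ℕ => 1 / (n : ℝ)) Filter.atTop (nhds 0) := by
  refine ⟨?_, ?_, tendsto_one_div_atTop_nhds_zero_nat⟩
  · intro k
    rw [Finset.sum_eq_single k]
    · unfold grev
      rw [if_pos (by simp)]
      simp [Finset.filter_eq', lt_irrefl]
    · intro i _ hik
      simp [grev, Ne.symm hik]
    · intro h
      exact absurd (Finset.mem_univ k) h
  · have h1 : ∀ i : Fin n,
        grev (fun j => if i = j then (1 : ℝ) else 2) (fun _ => (1 : ℝ)) i = 1 := by
      intro i
      unfold grev
      rw [if_pos (by simp)]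
      exact Finset.inf'_const _ 1
    rw [Finset.sum_congr rfl (fun i _ => h1 i)]
    simp
end

section
/- Given historical prices P with choice c and new prices p ≥ 0 with f(p) > 0 (where f is the single-customer worst-case revenue), let P_max ≥ max_j P_j be a bound. Then there exists a price vector p' with p'_j < P_max for all j such that f(p') ≥ f(p); i.e., pricing any product at or above the maximum historical purchase price never increases worst-case revenue. -/
/-- The worst-case revenue from a customer with historical prices `P` and choice
`c` under new prices `p`: zero if the no-purchase option is feasible
(`p c ≥ P c`), else the minimum price among feasible products
(`p j - p c ≤ P j - P c`, a set containing `c`). -/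
noncomputable def wrevF {n : ℕ} (P p : Fin n → ℝ) (c : Fin n) : ℝ :=
  if p c < P c then
    (Finset.univ.filter fun j => p j - p c ≤ P j - P c).inf' ⟨c, by simp⟩ p
  else 0

/-- If the worst-case revenue `f(p)` is positive and `Pmax`
bounds all historical prices, then there are prices `p'` with every `p' j <
Pmax` and `f(p') ≥ f(p)`: pricing any product at or above the maximum
historical purchase price never increases worst-case revenue. -/
theorem stmt_15 (n : ℕ) (P p : Fin n → ℝ) (c : Fin n)
    (hP : ∀ j, 0 < P j) (hp : ∀ j, 0 ≤ p j)
    (Pmax : ℝ) (hPmax : ∀ j, P j ≤ Pmax)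
    (hf : 0 < wrevF P p c) :
    ∃ p' : Fin n → ℝ, (∀ j, 0 ≤ p' j) ∧ (∀ j, p' j < Pmax) ∧
      wrevF P p c ≤ wrevF P p' c := by
  have hpc : p c < P c := by
    by_contra h
    rw [wrevF, if_neg h] at hf
    exact lt_irrefl 0 hf
  refine ⟨fun j => min (p j) (p c), fun j => le_min (hp j) (hp c),
    fun j => lt_of_le_of_lt (min_le_right _ _) (lt_of_lt_of_le hpc (hPmax c)), ?_⟩
  have hc' : min (p c) (p c) < P c := by simpa using hpc
  rw [wrevF, wrevF, if_pos hpc, if_pos hc']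
  have hcmem : c ∈ Finset.univ.filter fun j => p j - p c ≤ P j - P c := by simp
  have hle_pc : (Finset.univ.filter fun j => p j - p c ≤ P j - P c).inf'
      ⟨c, by simp⟩ p ≤ p c := Finset.inf'_le _ hcmem
  apply Finset.le_inf'
  intro j hj
  simp only [Finset.mem_filter, Finset.mem_univ, true_and, min_self] at hj
  rcases le_total (p j) (p c) with h | h
  · rw [min_eq_left h]
    have hjmem : j ∈ Finset.univ.filter fun j => p j - p c ≤ P j - P c := by
      simp only [Finset.mem_filter, Finset.mem_univ, true_and]
      rw [min_eq_left h] at hj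
      exact hj
    exact Finset.inf'_le _ hjmem
  · rw [min_eq_right h]
    exact hle_pc
end

section
/- Let p⁰ > 0 be sorted prices 0 < p⁰_1 ≤ ... ≤ p⁰_n achieving the relaxed optimum g(0) of the pricing problem (with non-strict indicator constraints), with associated purchase assignment y⁰. For any δ' > 0 small enough that p' > 0, define p'_j = p⁰_j − j·δ'/(m n). Then the true worst-case total revenue satisfies ∑_{i=1}^m f_i(p') ≥ g(0) − δ', where f_i is customer i's worst-case revenue under strict no-purchase conditions. -/
lemma aux_key {n : ℕ} (m : ℕ) (hm : 0 < m) (hn : 0 < n)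
    (P p0 p' : Fin n → ℝ) (c : Fin n) (hsorted : Monotone p0)
    (δ' : ℝ) (hδ : 0 < δ')
    (hp'def : ∀ j : Fin n, p' j = p0 j - ((j.1 : ℝ) + 1) * δ' / (m * n))
    (hp'pos : ∀ j, 0 < p' j) :
    grev P p0 c - δ' / m ≤ wrevF P p' c := by
  have hmpos : (0:ℝ) < m := by exact_mod_cast hm
  have hnpos : (0:ℝ) < n := by exact_mod_cast hn
  have ha : (0:ℝ) < δ' / (m * n) := by positivity
  have hp'def' : ∀ j : Fin n, p' j = p0 j - ((j.1 : ℝ) + 1) * (δ' / (m * n)) := by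
    intro j; rw [hp'def j, mul_div_assoc]
  have hd : ∀ j : Fin n, ((j.1 : ℝ) + 1) * (δ' / (m * n)) ≤ δ' / m := by
    intro j
    have hjn : (j.1 : ℝ) + 1 ≤ n := by exact_mod_cast j.2
    have : δ' / m = (n : ℝ) * (δ' / (m * n)) := by field_simp
    rw [this]
    exact mul_le_mul_of_nonneg_right hjn ha.le
  unfold grev wrevF
  by_cases h : p0 c ≤ P c
  · rw [if_pos h, if_pos (by rw [hp'def' c]; nlinarith [mul_pos (by positivity : (0:ℝ) < (c.1:ℝ)+1) ha])]
    apply Finset.le_inf'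
    intro j hj
    simp only [Finset.mem_filter, Finset.mem_univ, true_and] at hj
    have hpj : p0 j - δ' / m ≤ p' j := by rw [hp'def' j]; linarith [hd j]
    have hinf : (Finset.univ.filter fun j => j = c ∨ p0 j - p0 c < P j - P c).inf'
        ⟨c, by simp⟩ p0 ≤ p0 j := by
      by_cases hjS : j = c ∨ p0 j - p0 c < P j - P c
      · exact Finset.inf'_le _ (by simp [hjS])
      · push_neg at hjS
        have hcj : c ≤ j := by
          by_contra hlt
          push_neg at hlt
          have hjc : (j.1 : ℝ) + 1 < (c.1 : ℝ) + 1 := by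
            have := hlt
            simp only [Fin.lt_def] at this
            exact_mod_cast Nat.succ_lt_succ this
          have hkey : p0 j - p0 c < p' j - p' c := by
            rw [hp'def' j, hp'def' c]
            nlinarith [mul_lt_mul_of_pos_right hjc ha]
          linarith [hkey, hj, hjS.2]
        calc (Finset.univ.filter fun j => j = c ∨ p0 j - p0 c < P j - P c).inf'
              ⟨c, by simp⟩ p0 ≤ p0 c := Finset.inf'_le _ (by simp)
          _ ≤ p0 j := hsorted hcj
    linarith
  · rw [if_neg h]
    have h0 : (0:ℝ) ≤ if p' c < P c then
        (Finset.univ.filter fun j => p' j - p' c ≤ P j - P c).inf' ⟨c, by simp⟩ p'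
      else 0 := by
      split
      · exact Finset.le_inf' _ _ (fun j _ => (hp'pos j).le)
      · exact le_refl 0
    have : (0:ℝ) ≤ δ' / m := by positivity
    linarith

/-- Let `p0 > 0` be sorted prices attaining the relaxed optimum
`g(0) = ∑ i, grev (P i) p0 (c i)` of the pricing problem, and for small
`δ' > 0` define `p' j = p0 j - (j + 1) * δ' / (m * n)` (1-based rank `j + 1`),
with `p' > 0`. Then the true worst-case total revenue (strict no-purchase
conditions) satisfies `∑ i, f i p' ≥ g(0) - δ'`. -/
theorem stmt_16 (m n : ℕ) (hm : 0 < m) (hn : 0 < n)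
    (P : Fin m → Fin n → ℝ) (c : Fin m → Fin n)
    (hP : ∀ i j, 0 < P i j)
    (p0 : Fin n → ℝ) (hp0pos : ∀ j, 0 < p0 j) (hsorted : Monotone p0)
    (hopt : ∀ p : Fin n → ℝ, (∀ j, 0 ≤ p j) →
      ∑ i, grev (P i) p (c i) ≤ ∑ i, grev (P i) p0 (c i))
    (δ' : ℝ) (hδ : 0 < δ')
    (p' : Fin n → ℝ)
    (hp'def : ∀ j : Fin n, p' j = p0 j - ((j.1 : ℝ) + 1) * δ' / (m * n))
    (hp'pos : ∀ j, 0 < p' j) :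
    (∑ i, grev (P i) p0 (c i)) - δ' ≤ ∑ i, wrevF (P i) p' (c i) := by
  have hmpos : (0:ℝ) < m := by exact_mod_cast hm
  have heq : (∑ i, grev (P i) p0 (c i)) - δ'
      = ∑ i : Fin m, (grev (P i) p0 (c i) - δ' / m) := by
    rw [Finset.sum_sub_distrib, Finset.sum_const, Finset.card_univ, Fintype.card_fin,
      nsmul_eq_mul]
    field_simp
  rw [heq]
  exact Finset.sum_le_sum fun i _ =>
    aux_key m hm hn (P i) p0 p' (c i) hsorted δ' hδ hp'def hp'pos
end

section
/- For the relaxed pricing problem with ε = 0 (non-strict indicator constraints), the optimal value g(0) is finite and attained by some feasible (p, τ, y); moreover g(0) ≥ m·τ* ≥ the value of any feasible strict solution, where m·τ* = sup_{p ≥ 0} ∑_i f_i(p). -/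
lemma grev_nonneg {n : ℕ} {P p : Fin n → ℝ} {c : Fin n} (hp : ∀ j, 0 ≤ p j) :
    0 ≤ grev P p c := by
  unfold grev
  split
  · exact Finset.le_inf' _ _ fun j _ => hp j
  · exact le_refl 0

lemma wrevF_le_grev {n : ℕ} {P p : Fin n → ℝ} {c : Fin n} (hp : ∀ j, 0 ≤ p j) :
    wrevF P p c ≤ grev P p c := by
  unfold wrevF grev
  by_cases h1 : p c < P c
  · rw [if_pos h1, if_pos h1.le]
    apply Finset.inf'_mono
    intro j hj
    simp only [Finset.mem_filter, Finset.mem_univ, true_and] at hj ⊢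
    rcases hj with rfl | h
    · simp
    · exact h.le
  · rw [if_neg h1]
    by_cases h2 : p c ≤ P c
    · rw [if_pos h2]
      exact Finset.le_inf' _ _ fun j _ => hp j
    · rw [if_neg h2]

lemma grev_truncate {n : ℕ} {P p : Fin n → ℝ} {c : Fin n} {B : ℝ}
    (hp : ∀ j, 0 ≤ p j) (hB : ∀ j, P j ≤ B) (hB0 : 0 ≤ B) :
    grev P p c ≤ grev P (fun j => min (p j) B) c := by
  by_cases h : p c ≤ P c
  · have hpc : min (p c) B = p c := min_eq_left (h.trans (hB c))
    unfold grev
    rw [if_pos h, if_pos (show min (p c) B ≤ P c by rw [hpc]; exact h)]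
    apply Finset.le_inf'
    intro j hj
    simp only [Finset.mem_filter, Finset.mem_univ, true_and] at hj
    rcases hj with rfl | hlt
    · rw [hpc]
      exact Finset.inf'_le _ (by simp)
    · rw [hpc] at hlt
      by_cases hb : p j ≤ B
      · rw [min_eq_left hb] at hlt ⊢
        exact Finset.inf'_le _ (by simp [Or.inr hlt])
      · exfalso
        push_neg at hb
        rw [min_eq_right hb.le] at hlt
        have := hB j
        linarith
  · have h0 : grev P p c = 0 := by unfold grev; rw [if_neg h]
    rw [h0]
    exact grev_nonneg fun j => le_min (hp j) hB0

lemma grev_usc {n : ℕ} (P : Fin n → ℝ) (c : Fin n) (K : Set (Fin n → ℝ))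
    (hK : ∀ q ∈ K, ∀ j, 0 ≤ q j) {p : Fin n → ℝ} (hp : p ∈ K) {ε : ℝ} (hε : 0 < ε) :
    ∀ᶠ q in nhdsWithin p K, grev P q c < grev P p c + ε := by
  by_cases h : p c ≤ P c
  · have hcA : c ∈ Finset.univ.filter fun j => j = c ∨ p j - p c < P j - P c := by simp
    obtain ⟨j, hjA, hj⟩ := Finset.exists_mem_eq_inf' (H := ⟨c, hcA⟩) p
    have hg : grev P p c = p j := by unfold grev; rw [if_pos h]; exact hj
    have hg0 : 0 ≤ grev P p c := grev_nonneg (hK p hp)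
    have e1 : ∀ᶠ q in nhds p, q j < grev P p c + ε := by
      refine ContinuousAt.eventually_lt (f := fun q : Fin n → ℝ => q j)
        (continuous_apply j).continuousAt continuousAt_const ?_
      show p j < grev P p c + ε
      rw [hg]; linarith
    have e2 : ∀ᶠ q in nhds p, j = c ∨ q j - q c < P j - P c := by
      simp only [Finset.mem_filter, Finset.mem_univ, true_and] at hjA
      rcases hjA with rfl | hlt
      · exact Filter.Eventually.of_forall fun _ => Or.inl rfl
      · have hc : ContinuousAt (fun q : Fin n → ℝ => q j - q c) p :=
          ((continuous_apply j).sub (continuous_apply c)).continuousAt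
        exact (hc.eventually_lt continuousAt_const hlt).mono fun q hq => Or.inr hq
    filter_upwards [e1.filter_mono nhdsWithin_le_nhds, e2.filter_mono nhdsWithin_le_nhds]
      with q h1 h2
    by_cases hq : q c ≤ P c
    · have hle : grev P q c ≤ q j := by
        unfold grev
        rw [if_pos hq]
        exact Finset.inf'_le _ (by simp only [Finset.mem_filter, Finset.mem_univ, true_and]; exact h2)
      linarith
    · have h0 : grev P q c = 0 := by unfold grev; rw [if_neg hq]
      linarith
  · push_neg at h
    have e1 : ∀ᶠ q in nhds p, P c < q c :=
      ContinuousAt.eventually_lt (g := fun q : Fin n → ℝ => q c)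
        continuousAt_const (continuous_apply c).continuousAt h
    filter_upwards [e1.filter_mono nhdsWithin_le_nhds] with q h1
    have h2 : grev P q c = 0 := by unfold grev; rw [if_neg (not_le.mpr h1)]
    have h3 : grev P p c = 0 := by unfold grev; rw [if_neg (not_le.mpr h)]
    rw [h2, h3]
    linarith

lemma usc_exists_max {β : Type*} [TopologicalSpace β] {s : Set β} (hs : IsCompact s)
    (hne : s.Nonempty) {f : β → ℝ}
    (hf : ∀ x ∈ s, ∀ y, f x < y → ∀ᶠ q in nhdsWithin x s, f q < y) :
    ∃ x ∈ s, ∀ q ∈ s, f q ≤ f x := by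
  by_contra hcon
  push_neg at hcon
  choose y hy hlt using hcon
  have h1 : ∀ x (hx : x ∈ s), ∃ u ∈ nhds x, u ∩ s ⊆ {q | f q < f (y x hx)} :=
    fun x hx => mem_nhdsWithin_iff_exists_mem_nhds_inter.mp (hf x hx _ (hlt x hx))
  choose U hU hUsub using h1
  obtain ⟨t, hts⟩ := hs.elim_nhds_subcover' U hU
  have htne : t.Nonempty := by
    obtain ⟨x0, hx0⟩ := hne
    obtain ⟨a, hat, -⟩ := Set.mem_iUnion₂.mp (hts hx0)
    exact ⟨a, hat⟩
  obtain ⟨b, hbt, hb⟩ := t.exists_max_image (fun a : s => f (y a a.2)) htne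
  have hyb : y b b.2 ∈ s := hy b b.2
  obtain ⟨a, hat, ha⟩ := Set.mem_iUnion₂.mp (hts hyb)
  have hlt2 : f (y b b.2) < f (y a a.2) := hUsub a a.2 ⟨ha, hyb⟩
  have := hb a hat
  have this : f (y a a.2) ≤ f (y b b.2) := this
  linarith

/-- The relaxed (`ε = 0`, non-strict indicators) pricing problem
has a finite optimal value `g(0)` attained by some nonnegative price vector
`p0`; moreover `g(0)` dominates the value of every feasible strict solution,
i.e. `g(0) ≥ m·τ* = sup_(p ≥ 0) ∑ i, f i p`. -/
theorem stmt_18 (m n : ℕ) (P : Fin m → Fin n → ℝ) (c : Fin m → Fin n)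
    (hP : ∀ i j, 0 < P i j) :
    ∃ p0 : Fin n → ℝ, (∀ j, 0 ≤ p0 j) ∧
      (∀ p : Fin n → ℝ, (∀ j, 0 ≤ p j) →
        ∑ i, grev (P i) p (c i) ≤ ∑ i, grev (P i) p0 (c i)) ∧
      (∀ p : Fin n → ℝ, (∀ j, 0 ≤ p j) →
        ∑ i, wrevF (P i) p (c i) ≤ ∑ i, grev (P i) p0 (c i)) := by
  rcases Nat.eq_zero_or_pos m with hm | hm
  · subst hm
    exact ⟨0, fun j => le_refl 0, fun p hp => by simp, fun p hp => by simp⟩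
  · have hmne : Nonempty (Fin m) := ⟨⟨0, hm⟩⟩
    set B : ℝ := ∑ i, ∑ j, P i j with hBdef
    have hB0 : 0 ≤ B := Finset.sum_nonneg fun i _ => Finset.sum_nonneg fun j _ => (hP i j).le
    have hBij : ∀ i j, P i j ≤ B := by
      intro i j
      calc P i j ≤ ∑ j', P i j' :=
            Finset.single_le_sum (fun j' _ => (hP i j').le) (Finset.mem_univ j)
        _ ≤ B := Finset.single_le_sum
            (fun i' _ => Finset.sum_nonneg fun j' _ => (hP i' j').le) (Finset.mem_univ i)
    set K : Set (Fin n → ℝ) := Set.Icc 0 (fun _ => B) with hKdef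
    have hKmem : ∀ q ∈ K, ∀ j, 0 ≤ q j := fun q hq j => hq.1 j
    have hKcomp : IsCompact K := isCompact_Icc
    have hKne : K.Nonempty := ⟨0, le_refl 0, fun j => hB0⟩
    have husc : ∀ p ∈ K, ∀ y, (∑ i, grev (P i) p (c i)) < y →
        ∀ᶠ q in nhdsWithin p K, (∑ i, grev (P i) q (c i)) < y := by
      intro p hpK y hy
      set S := ∑ i, grev (P i) p (c i) with hS
      set ε := (y - S) / m with hε
      have hm0 : (0:ℝ) < m := by exact_mod_cast hm
      have hε0 : 0 < ε := div_pos (by linarith) hm0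
      have hall : ∀ᶠ q in nhdsWithin p K, ∀ i, grev (P i) q (c i) < grev (P i) p (c i) + ε := by
        rw [Filter.eventually_all]
        intro i
        exact grev_usc (P i) (c i) K hKmem hpK hε0
      filter_upwards [hall] with q hq
      have hlt : ∑ i, grev (P i) q (c i) < ∑ i, (grev (P i) p (c i) + ε) :=
        Finset.sum_lt_sum_of_nonempty Finset.univ_nonempty fun i _ => hq i
      have heq : ∑ i, (grev (P i) p (c i) + ε) = S + m * ε := by
        rw [Finset.sum_add_distrib, Finset.sum_const, Finset.card_univ, Fintype.card_fin,
          nsmul_eq_mul]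
      have : (m:ℝ) * ε = y - S := by
        rw [hε]
        field_simp
      rw [heq, this] at hlt
      linarith
    obtain ⟨p0, hp0K, hmax⟩ := usc_exists_max hKcomp hKne husc
    have hG : ∀ p : Fin n → ℝ, (∀ j, 0 ≤ p j) →
        ∑ i, grev (P i) p (c i) ≤ ∑ i, grev (P i) p0 (c i) := by
      intro p hp
      have hp'K : (fun j => min (p j) B) ∈ K :=
        ⟨fun j => le_min (hp j) hB0, fun j => min_le_right _ _⟩
      calc ∑ i, grev (P i) p (c i) ≤ ∑ i, grev (P i) (fun j => min (p j) B) (c i) :=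
            Finset.sum_le_sum fun i _ => grev_truncate hp (hBij i) hB0
        _ ≤ _ := hmax _ hp'K
    refine ⟨p0, hKmem p0 hp0K, hG, fun p hp => ?_⟩
    exact le_trans (Finset.sum_le_sum fun i _ => wrevF_le_grev hp) (hG p hp)
end

section
/- For large enough m and k ≤ m, the ratio m / (∑_{i=k+1}^{m} 1/i + 1) converges to 1/(1 + log(m/k)) in the sense that ∑_{i=k+1}^m 1/i − log(m/k) → 0 as k, m → ∞ with m/k fixed; consequently, the performance guarantee 1/(1 + log(P̄/P̲)) for cut-off pricing is asymptotically tight. -/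
open Real Filter

lemma harm_diff (a b : ℕ) (h : a ≤ b) :
    ((harmonic b : ℝ)) - harmonic a = ∑ i ∈ Finset.Ioc a b, (1 : ℝ) / i := by
  have : ∀ n : ℕ, (harmonic n : ℝ) = ∑ i ∈ Finset.Icc 1 n, (1:ℝ)/i := by
    intro n
    rw [harmonic_eq_sum_Icc]
    push_cast
    simp [one_div]
  rw [this, this, eq_comm, eq_sub_iff_add_eq, ← Finset.sum_union]
  · congr 1
    rw [Finset.union_comm]
    ext x
    simp only [Finset.mem_union, Finset.mem_Icc, Finset.mem_Ioc]
    omega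
  · rw [Finset.disjoint_left]
    intro x hx hx'
    simp only [Finset.mem_Icc, Finset.mem_Ioc] at *
    omega

/-- With the ratio `m / k = r` fixed,
`∑_{i = k+1}^{r k} 1 / i - log (r k / k) → 0` as `k → ∞`; this is the harmonic
estimate behind the asymptotic tightness of the `1 / (1 + log (Pmax/Pmin))`
guarantee for cut-off pricing. -/
theorem stmt_19 (r : ℕ) (hr : 1 ≤ r) :
    Filter.Tendsto
      (fun k : ℕ => (∑ i ∈ Finset.Ioc k (r * k), (1 : ℝ) / i) -
        Real.log ((r * k : ℝ) / k))
      Filter.atTop (nhds 0) := by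
  have hmul : Tendsto (fun k : ℕ => r * k) atTop atTop :=
    Tendsto.comp (tendsto_atTop_mono (fun k => Nat.le_mul_of_pos_left k (by omega)) tendsto_id) tendsto_id
  have h1 := (Real.tendsto_harmonic_sub_log.comp hmul).sub Real.tendsto_harmonic_sub_log
  rw [sub_self] at h1
  apply h1.congr'
  filter_upwards [eventually_gt_atTop 0] with k hk
  have hk' : (k : ℝ) > 0 := by exact_mod_cast hk
  have hrk : (0:ℝ) < (r*k : ℕ) := by positivity
  simp only [Function.comp]
  rw [← harm_diff k (r*k) (Nat.le_mul_of_pos_left k (by omega)),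
    Real.log_div (by positivity) (ne_of_gt hk')]
  push_cast
  ring
end
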